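/- Let X ⊆ ℝ^m be a closed set, f : X → ℝ^n a continuous function, a ∈ X, and C, ℓ > 0. Suppose there is a neighbourhood W of (a, f(a)) in ℝ^m × ℝ^n such that for every z = (x, f(x)) ∈ Γ_f ∩ W one has d(z, X × {f(a)}) ≥ C · d(z, (X × {f(a)}) ∩ Γ_f)^ℓ. Then there is a neighbourhood U of a in ℝ^m such that ‖f(x) − f(a)‖ ≥ C · d(x, f^{−1}(f(a)))^ℓ for all x ∈ X ∩ U. -/

import Mathlib

open Metric Set Filter Topology

/-- The embedding of `ℝ^m × ℝ^n` into the same space equipped with the sum norm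
`‖(x,y)‖ = ‖x‖ + ‖y‖` (the `L¹` product of the Euclidean spaces). -/
noncomputable def sumNormEmb (m n : ℕ) :
    EuclideanSpace ℝ (Fin m) × EuclideanSpace ℝ (Fin n) →
      WithLp 1 (EuclideanSpace ℝ (Fin m) × EuclideanSpace ℝ (Fin n)) :=
  (WithLp.equiv 1 _).symm

set_option maxHeartbeats 1000000

lemma sumNormEmb_dist (m n : ℕ) (z w : EuclideanSpace ℝ (Fin m) × EuclideanSpace ℝ (Fin n)) :
    dist (sumNormEmb m n z) (sumNormEmb m n w) = dist z.1 w.1 + dist z.2 w.2 := by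
  rw [sumNormEmb, WithLp.prod_dist_eq_add (by norm_num)]
  simp

/-- if the graph of `f` is regularly separated from `X × {f a}` near
`(a, f a)` with constants `C, ℓ`, then `f` satisfies the Łojasiewicz inequality
`‖f x - f a‖ ≥ C · d(x, f⁻¹(f a))^ℓ` near `a`. -/
theorem lojasiewicz_of_regular_separation
    (m n : ℕ) (X : Set (EuclideanSpace ℝ (Fin m)))
    (f : EuclideanSpace ℝ (Fin m) → EuclideanSpace ℝ (Fin n))
    (hX : IsClosed X) (hf : ContinuousOn f X)
    (a : EuclideanSpace ℝ (Fin m)) (ha : a ∈ X)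
    (C ℓ : ℝ) (hC : 0 < C) (hℓ : 0 < ℓ)
    (Γ : Set (EuclideanSpace ℝ (Fin m) × EuclideanSpace ℝ (Fin n)))
    (hΓ : Γ = {z | z.1 ∈ X ∧ z.2 = f z.1})
    (hsep : ∃ W ∈ 𝓝 ((a, f a) : EuclideanSpace ℝ (Fin m) × EuclideanSpace ℝ (Fin n)),
      ∀ z ∈ Γ ∩ W,
        infDist (sumNormEmb m n z) (sumNormEmb m n '' (X ×ˢ ({f a} : Set (EuclideanSpace ℝ (Fin n)))))
          ≥ C * (infDist (sumNormEmb m n z)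
              (sumNormEmb m n '' ((X ×ˢ ({f a} : Set (EuclideanSpace ℝ (Fin n)))) ∩ Γ))) ^ ℓ) :
    ∃ U ∈ 𝓝 a, ∀ x ∈ X ∩ U,
      ‖f x - f a‖ ≥ C * (infDist x {x' ∈ X | f x' = f a}) ^ ℓ := by

  obtain ⟨W, hW, hsep⟩ := hsep
  -- choose U from continuity
  have hcw : ContinuousWithinAt (fun x => ((x, f x) :
      EuclideanSpace ℝ (Fin m) × EuclideanSpace ℝ (Fin n))) X a :=
    (continuousWithinAt_id).prodMk (hf a ha)
  have hpre : (fun x => ((x, f x) : _ × _)) ⁻¹' W ∈ 𝓝[X] a := hcw hW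
  rw [mem_nhdsWithin] at hpre
  obtain ⟨U, hUopen, haU, hU⟩ := hpre
  refine ⟨U, hUopen.mem_nhds haU, ?_⟩
  rintro x ⟨hxX, hxU⟩
  set S : Set (EuclideanSpace ℝ (Fin m)) := {x' ∈ X | f x' = f a}
  have hzΓW : ((x, f x) : _ × _) ∈ Γ ∩ W := by
    refine ⟨by simp [hΓ, hxX], hU ⟨hxU, hxX⟩⟩
  have key := hsep _ hzΓW
  -- upper bound on the first infDist
  have h1 : infDist (sumNormEmb m n (x, f x))
      (sumNormEmb m n '' (X ×ˢ ({f a} : Set (EuclideanSpace ℝ (Fin n))))) ≤ ‖f x - f a‖ := by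
    have hmem : sumNormEmb m n (x, f a) ∈
        sumNormEmb m n '' (X ×ˢ ({f a} : Set (EuclideanSpace ℝ (Fin n)))) :=
      mem_image_of_mem _ (by exact ⟨hxX, rfl⟩)
    calc infDist _ _ ≤ dist (sumNormEmb m n (x, f x)) (sumNormEmb m n (x, f a)) :=
          infDist_le_dist_of_mem hmem
      _ = ‖f x - f a‖ := by rw [sumNormEmb_dist]; simp [dist_eq_norm]
  -- lower bound on the second infDist
  have h2 : infDist x S ≤ infDist (sumNormEmb m n (x, f x))
      (sumNormEmb m n '' ((X ×ˢ ({f a} : Set (EuclideanSpace ℝ (Fin n)))) ∩ Γ)) := by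
    have hne : (sumNormEmb m n '' ((X ×ˢ ({f a} : Set (EuclideanSpace ℝ (Fin n)))) ∩ Γ)).Nonempty := by
      refine ⟨sumNormEmb m n (a, f a), mem_image_of_mem _ ⟨mk_mem_prod ha rfl, ?_⟩⟩
      simp [hΓ, ha]
    refine not_lt.1 fun hlt => ?_
    obtain ⟨y, hy, hdy⟩ := (infDist_lt_iff hne).1 hlt
    obtain ⟨w, ⟨⟨hw1, hw2⟩, hwΓ⟩, rfl⟩ := hy
    refine absurd hdy (not_lt.2 ?_)
    have hwS : w.1 ∈ S := by
      rw [hΓ] at hwΓ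
      exact ⟨hw1, by rw [← hwΓ.2, hw2]⟩
    rw [sumNormEmb_dist]
    exact le_trans (infDist_le_dist_of_mem hwS) (le_add_of_nonneg_right dist_nonneg)
  -- combine
  have h3 : C * (infDist x S) ^ ℓ ≤ C * (infDist (sumNormEmb m n (x, f x))
      (sumNormEmb m n '' ((X ×ˢ ({f a} : Set (EuclideanSpace ℝ (Fin n)))) ∩ Γ))) ^ ℓ :=
    mul_le_mul_of_nonneg_left (Real.rpow_le_rpow infDist_nonneg h2 hℓ.le) hC.le
  exact le_trans h3 (le_trans key h1)
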